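/- Industry profit is minimized at the lowest symmetric implementable contract (uniform case): let A ∈ (0,1), assume the A-large condition (every (p1,p2) ∈ P satisfies p1 ≤ A, p2 ≤ A and |p1 − p2| ≤ 1 − A), assume {p ∈ (0,1] : H(p,p) ≤ 0} is nonempty, and let p̲ = inf{p ∈ (0,1] : H(p,p) ≤ 0}. Then (p̲,p̲) ∈ P, 1/2 ∈ φ(p̲,p̲), J^Π(p̲,p̲,1/2) = p̲·(1−p̲²), and for every (p1,p2) ∈ P and every α ∈ φ(p1,p2), J^Π(p1,p2,α) ≥ p̲·(1−p̲²). -/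

import Mathlib

/-- Demand of seller 1 when ranked second (uniform match utilities). -/
noncomputable def D12 (A p1 p2 : ℝ) : ℝ := -A^2/2 + p1^2/2 - p1*p2 + A - p1 + p2

/-- Demand of seller 2 when ranked second (uniform match utilities). -/
noncomputable def D22 (A p1 p2 : ℝ) : ℝ := -A^2/2 + p2^2/2 - p1*p2 + A + p1 - p2

/-- The bonus from being ranked first instead of second (uniform case). -/
noncomputable def bonus (A p1 p2 : ℝ) : ℝ := (1-A)^2 - (1/2)*(p1-p2)^2

/-- Seller 1's optimal deviation value when ranked second. -/
noncomputable def M1 (A p2 : ℝ) : ℝ :=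
  sSup ((fun p' => p' * D12 A p' p2) '' Set.Icc (0:ℝ) 1)

/-- Seller 2's optimal deviation value when ranked second. -/
noncomputable def M2 (A p1 : ℝ) : ℝ :=
  sSup ((fun p' => p' * D22 A p1 p') '' Set.Icc (0:ℝ) 1)

/-- The function whose nonpositivity characterizes implementable prices. -/
noncomputable def H (A p1 p2 : ℝ) : ℝ := M1 A p2 / p1 + M2 A p1 / p2 + p1*p2 - 1

/-- The set of implementable prices. -/
def implementableP (A : ℝ) : Set (ℝ × ℝ) :=
  {q | 0 < q.1 ∧ q.1 ≤ 1 ∧ 0 < q.2 ∧ q.2 ≤ 1 ∧ H A q.1 q.2 ≤ 0}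

/-- The set of implementable search orders at prices `(p1, p2)`. -/
def phi (A p1 p2 : ℝ) : Set ℝ :=
  {α | α ∈ Set.Icc (0:ℝ) 1
    ∧ M1 A p2 ≤ p1 * D12 A p1 p2 + α * p1 * bonus A p1 p2
    ∧ M2 A p1 ≤ p2 * D22 A p1 p2 + (1-α) * p2 * bonus A p1 p2}

/-- Industry profit under contract `(p1, p2, α)` (uniform case). -/
noncomputable def JPi (A p1 p2 α : ℝ) : ℝ :=
  p1 * D12 A p1 p2 + p2 * D22 A p1 p2
    + α * p1 * bonus A p1 p2 + (1-α) * p2 * bonus A p1 p2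

private lemma img_nonempty (A t : ℝ) :
    ((fun p' => p' * D12 A p' t) '' Set.Icc (0:ℝ) 1).Nonempty :=
  ⟨_, Set.mem_image_of_mem _ (Set.mem_Icc.mpr ⟨le_refl (0:ℝ), zero_le_one⟩)⟩

private lemma img_bdd (A t : ℝ) (hA0 : 0 ≤ A) (hA1 : A ≤ 1) (ht0 : 0 ≤ t) (ht1 : t ≤ 1) :
    BddAbove ((fun p' => p' * D12 A p' t) '' Set.Icc (0:ℝ) 1) := by
  refine ⟨3, ?_⟩
  rintro z ⟨q, ⟨hq0, hq1⟩, rfl⟩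
  simp only [D12]
  nlinarith [mul_nonneg hq0 ht0, mul_nonneg hq0 hq0, sq_nonneg A, mul_nonneg hq0 hA0,
    mul_nonneg (mul_nonneg hq0 hq0) ht0, mul_nonneg (mul_nonneg hq0 hq0) hq0,
    mul_nonneg (mul_nonneg hq0 hA0) hA0]

private lemma M1_ge (A t q : ℝ) (hA0 : 0 ≤ A) (hA1 : A ≤ 1) (ht0 : 0 ≤ t) (ht1 : t ≤ 1)
    (hq : q ∈ Set.Icc (0:ℝ) 1) : q * D12 A q t ≤ M1 A t :=
  le_csSup (img_bdd A t hA0 hA1 ht0 ht1) (Set.mem_image_of_mem _ hq)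

private lemma M1_mono (A t t' : ℝ) (hA0 : 0 ≤ A) (hA1 : A ≤ 1) (h : t ≤ t')
    (ht0 : 0 ≤ t') (ht1 : t' ≤ 1) : M1 A t ≤ M1 A t' := by
  apply csSup_le (img_nonempty A t)
  rintro z ⟨q, ⟨hq0, hq1⟩, rfl⟩
  show q * D12 A q t ≤ M1 A t'
  have h2 := M1_ge A t' q hA0 hA1 ht0 ht1 ⟨hq0, hq1⟩
  have h3 : q * D12 A q t ≤ q * D12 A q t' := by
    simp only [D12]
    nlinarith [mul_nonneg (mul_nonneg hq0 (sub_nonneg.mpr hq1)) (sub_nonneg.mpr h)]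
  linarith

private lemma M2_eq_M1 (A t : ℝ) : M2 A t = M1 A t := by
  have h : (fun p' => p' * D22 A t p') = (fun p' => p' * D12 A p' t) := by
    funext p'; simp only [D12, D22]; ring
  rw [M2, h, M1]

private lemma M1_lb (A t : ℝ) (hA0 : 0 < A) (hA1 : A ≤ 1) (ht0 : 0 ≤ t) (ht1 : t ≤ 1) :
    A^2/16 ≤ M1 A t := by
  have h := M1_ge A t (A/2) hA0.le hA1 ht0 ht1 ⟨by linarith, by linarith⟩
  have h2 : A^2/16 ≤ A/2 * D12 A (A/2) t := by
    simp only [D12]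
    nlinarith [mul_nonneg (mul_nonneg hA0.le ht0) (by linarith : (0:ℝ) ≤ 2 - A),
      mul_nonneg (mul_nonneg hA0.le hA0.le) (by linarith : (0:ℝ) ≤ 1 - A)]
  linarith

private lemma M1_midpoint (A a b : ℝ) (hA0 : 0 ≤ A) (hA1 : A ≤ 1)
    (ha0 : 0 ≤ a) (hb1 : b ≤ 1) (hab : a ≤ b) :
    2 * M1 A ((a+b)/2) ≤ M1 A a + M1 A b := by
  have h : M1 A ((a+b)/2) ≤ (M1 A a + M1 A b)/2 := by
    apply csSup_le (img_nonempty A _)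
    rintro z ⟨q, ⟨hq0, hq1⟩, rfl⟩
    show q * D12 A q ((a+b)/2) ≤ (M1 A a + M1 A b)/2
    have h1 := M1_ge A a q hA0 hA1 ha0 (hab.trans hb1) ⟨hq0, hq1⟩
    have h2 := M1_ge A b q hA0 hA1 (ha0.trans hab) hb1 ⟨hq0, hq1⟩
    have h3 : q * D12 A q ((a+b)/2) = (q * D12 A q a + q * D12 A q b)/2 := by
      simp only [D12]; ring
    linarith
  linarith

set_option maxHeartbeats 2000000 in
/-- Industry profit is minimized at the lowest symmetric implementable contract
(uniform case): the contract `(p̲, p̲, 1/2)` is implementable, yields profit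
`p̲·(1-p̲²)`, and every implementable contract yields at least this profit. -/
theorem industry_profit_min
    (A : ℝ) (hA : A ∈ Set.Ioo (0:ℝ) 1)
    (hlarge : ∀ q ∈ implementableP A, q.1 ≤ A ∧ q.2 ≤ A ∧ |q.1 - q.2| ≤ 1 - A)
    (hne : {p : ℝ | p ∈ Set.Ioc (0:ℝ) 1 ∧ H A p p ≤ 0}.Nonempty)
    (plow : ℝ) (hplow : plow = sInf {p : ℝ | p ∈ Set.Ioc (0:ℝ) 1 ∧ H A p p ≤ 0}) :
    (plow, plow) ∈ implementableP A
      ∧ (1/2 : ℝ) ∈ phi A plow plow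
      ∧ JPi A plow plow (1/2) = plow * (1 - plow^2)
      ∧ ∀ q ∈ implementableP A, ∀ α ∈ phi A q.1 q.2,
          plow * (1 - plow^2) ≤ JPi A q.1 q.2 α := by
  obtain ⟨hA0, hA1⟩ := hA
  set S := {p : ℝ | p ∈ Set.Ioc (0:ℝ) 1 ∧ H A p p ≤ 0} with hSdef
  have hbdd : BddBelow S := ⟨0, fun p hp => hp.1.1.le⟩
  obtain ⟨p0, hp0S⟩ := hne
  have hle : ∀ p ∈ S, plow ≤ p := fun p hp => hplow ▸ csInf_le hbdd hp
  have hplow1 : plow ≤ 1 := (hle p0 hp0S).trans hp0S.1.2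
  -- diagonal characterization
  have diag : ∀ p : ℝ, 0 < p → (H A p p ≤ 0 ↔ 2 * M1 A p ≤ p * (1 - p^2)) := by
    intro p hp
    simp only [H, M2_eq_M1]
    rw [← add_div]
    constructor
    · intro h
      have h2 : (M1 A p + M1 A p) / p ≤ 1 - p*p := by linarith
      rw [div_le_iff₀ hp] at h2
      nlinarith
    · intro h
      have h2 : (M1 A p + M1 A p) / p ≤ 1 - p*p := by
        rw [div_le_iff₀ hp]; nlinarith
      linarith
  have hplow0 : 0 < plow := by
    have h8 : ∀ p ∈ S, A^2/8 ≤ p := by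
      intro p hp
      have hp0 := hp.1.1
      have hp1 := hp.1.2
      have h := (diag p hp0).mp hp.2
      have hM := M1_lb A p hA0 hA1.le hp0.le hp1
      nlinarith [mul_nonneg (mul_nonneg hp0.le hp0.le) hp0.le]
    have h9 : A^2/8 ≤ sInf S := le_csInf ⟨p0, hp0S⟩ h8
    rw [hplow]; nlinarith [sq_nonneg A]
  -- plow ≤ 1/√3
  set c : ℝ := Real.sqrt 3 / 3 with hcdef
  have hc2 : c^2 = 1/3 := by
    rw [hcdef, div_pow, Real.sq_sqrt (by norm_num : (0:ℝ) ≤ 3)]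
    norm_num
  have hc0 : 0 < c := by
    rw [hcdef]; positivity
  have hc1 : c ≤ 1 := by nlinarith
  have hplow_c : plow ≤ c := by
    rcases le_or_gt p0 c with h | h
    · exact (hle p0 hp0S).trans h
    · have hp00 := hp0S.1.1
      have hp01 := hp0S.1.2
      have hup0 : 2 * M1 A p0 ≤ p0 * (1 - p0^2) := (diag p0 hp00).mp hp0S.2
      have hp0lt1 : p0 < 1 := by
        rcases lt_or_eq_of_le hp01 with h1 | h1
        · exact h1
        · exfalso
          have hM := M1_lb A p0 hA0 hA1.le hp00.le hp01
          rw [h1] at hup0 hM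
          nlinarith
      have hup0pos : 0 < p0 * (1 - p0^2) := by nlinarith
      have hcc : c * c = 1/3 := by nlinarith
      have g1 : c*c ≤ p0*c := mul_le_mul_of_nonneg_right h.le hc0.le
      have g2 : c*c ≤ p0*p0 := by nlinarith
      have f2 : (0:ℝ) ≤ p0^2 + p0*c + c^2 - 1 := by nlinarith
      have huc : p0 * (1 - p0^2) ≤ c * (1 - c^2) := by
        nlinarith [mul_nonneg (sub_nonneg.mpr h.le) f2]
      have hcont : ContinuousOn (fun x : ℝ => x * (1 - x^2)) (Set.Icc 0 c) :=
        Continuous.continuousOn (continuous_id.mul (continuous_const.sub (continuous_pow 2)))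
      have hmem : p0 * (1 - p0^2) ∈
          Set.Icc ((fun x:ℝ => x*(1-x^2)) 0) ((fun x:ℝ => x*(1-x^2)) c) := by
        simp only [Set.mem_Icc]
        constructor
        · norm_num; nlinarith
        · exact huc
      obtain ⟨p1, hp1mem, hp1eq⟩ := intermediate_value_Icc hc0.le hcont hmem
      simp only at hp1eq
      have hp1pos : 0 < p1 := by
        rcases lt_or_eq_of_le hp1mem.1 with h1 | h1
        · exact h1
        · exfalso
          rw [← h1] at hp1eq
          nlinarith [hup0pos]
      have hp1S : p1 ∈ S := by
        refine ⟨⟨hp1pos, hp1mem.2.trans hc1⟩, (diag p1 hp1pos).mpr ?_⟩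
        have hm := M1_mono A p1 p0 hA0.le hA1.le (hp1mem.2.trans h.le) hp00.le hp01
        calc 2 * M1 A p1 ≤ 2 * M1 A p0 := by linarith
          _ ≤ p0 * (1 - p0^2) := hup0
          _ = p1 * (1 - p1^2) := hp1eq.symm
      exact (hle p1 hp1S).trans hp1mem.2
  -- closure facts
  have hclosA : 2 * M1 A plow ≤ plow * (1 - plow^2) := by
    have hclosed : IsClosed {x : ℝ | 2 * M1 A plow ≤ x * (1 - x^2)} :=
      isClosed_le continuous_const (continuous_id.mul (continuous_const.sub (continuous_pow 2)))
    have hsub : S ⊆ {x : ℝ | 2 * M1 A plow ≤ x * (1 - x^2)} := by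
      intro p hp
      have h1 := M1_mono A plow p hA0.le hA1.le (hle p hp) hp.1.1.le hp.1.2
      have h2 := (diag p hp.1.1).mp hp.2
      simp only [Set.mem_setOf_eq]
      linarith
    have hmem : plow ∈ closure S := hplow ▸ csInf_mem_closure ⟨p0, hp0S⟩ hbdd
    exact closure_minimal hsub hclosed hmem
  have hclosB : plow * (1 - plow^2) ≤ 2 * M1 A plow := by
    have hclosed : IsClosed {x : ℝ | x * (1 - x^2) ≤ 2 * M1 A plow} :=
      isClosed_le (continuous_id.mul (continuous_const.sub (continuous_pow 2))) continuous_const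
    have hsub : Set.Ioo (0:ℝ) plow ⊆ {x : ℝ | x * (1 - x^2) ≤ 2 * M1 A plow} := by
      intro p hp
      have hpS : p ∉ S := fun hmem => absurd (hle p hmem) (not_le.mpr hp.2)
      have hp1 : p ≤ 1 := hp.2.le.trans hplow1
      have hH2 : ¬ (2 * M1 A p ≤ p * (1 - p^2)) :=
        fun hh => hpS ⟨⟨hp.1, hp1⟩, (diag p hp.1).mpr hh⟩
      push_neg at hH2
      have h3 := M1_mono A p plow hA0.le hA1.le hp.2.le hplow0.le hplow1
      simp only [Set.mem_setOf_eq]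
      linarith
    have hmem : plow ∈ closure (Set.Ioo (0:ℝ) plow) := by
      rw [closure_Ioo hplow0.ne]
      exact ⟨hplow0.le, le_refl _⟩
    exact closure_minimal hsub hclosed hmem
  have hP : (plow, plow) ∈ implementableP A :=
    ⟨hplow0, hplow1, hplow0, hplow1, (diag plow hplow0).mpr hclosA⟩
  have hphi : (1/2 : ℝ) ∈ phi A plow plow := by
    refine ⟨⟨by norm_num, by norm_num⟩, ?_, ?_⟩
    · have heq : plow * D12 A plow plow + 1/2 * plow * bonus A plow plow
          = plow * (1 - plow^2) / 2 := by simp only [D12, bonus]; ring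
      linarith
    · have heq : plow * D22 A plow plow + (1 - 1/2) * plow * bonus A plow plow
          = plow * (1 - plow^2) / 2 := by simp only [D22, bonus]; ring
      rw [M2_eq_M1]
      linarith
  have hJeq : JPi A plow plow (1/2) = plow * (1 - plow^2) := by
    simp only [JPi, D12, D22, bonus]; ring
  refine ⟨hP, hphi, hJeq, ?_⟩
  -- key lemma
  have key : ∀ a b : ℝ, 0 < a → a ≤ b → b ≤ 1 →
      M1 A b / a + M1 A a / b + a*b - 1 ≤ 0 →
      plow * (1 - plow^2) ≤ M1 A a + M1 A b := by
    intro a b ha hab hb1 hH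
    have hb0 : 0 < b := lt_of_lt_of_le ha hab
    set s : ℝ := (a+b)/2 with hsdef
    have hs0 : 0 < s := by rw [hsdef]; linarith
    have hs1 : s ≤ 1 := by rw [hsdef]; linarith
    have hsum := M1_midpoint A a b hA0.le hA1.le ha.le hb1 hab
    rcases le_or_gt plow s with hcase | hcase
    · have h1 := M1_mono A plow s hA0.le hA1.le hcase hs0.le hs1
      linarith
    · exfalso
      have hsS : s ∉ S := fun hmem => absurd (hle s hmem) (not_le.mpr hcase)
      have hHs : ¬ (2 * M1 A s ≤ s * (1 - s^2)) :=
        fun hh => hsS ⟨⟨hs0, hs1⟩, (diag s hs0).mpr hh⟩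
      push_neg at hHs
      have hxy : M1 A a ≤ M1 A b := M1_mono A a b hA0.le hA1.le hab hb0.le hb1
      set X := M1 A a with hXdef
      set Y := M1 A b with hYdef
      have hH2 : Y * b + X * a ≤ (1 - a*b) * (a*b) := by
        have hmul := mul_le_mul_of_nonneg_right
          (show Y/a + X/b ≤ 1 - a*b by linarith) (mul_pos ha hb0).le
        have he : (Y/a + X/b) * (a*b) = Y*b + X*a := by field_simp
        rw [he] at hmul
        linarith
      have hsab : a*b ≤ s^2 := by rw [hsdef]; nlinarith [sq_nonneg (b-a)]
      have hsc : s ≤ c := hcase.le.trans hplow_c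
      have hs2 : s^2 ≤ 1/3 := by nlinarith [mul_le_mul hsc hsc hs0.le hc0.le]
      have hse : s * (X + Y) ≤ Y*b + X*a := by
        rw [hsdef]
        nlinarith [mul_nonneg (sub_nonneg.mpr hab) (sub_nonneg.mpr hxy)]
      have habg : (1 - a*b)*(a*b) ≤ (1 - s^2)*(s^2) := by
        nlinarith [sub_nonneg.mpr hsab]
      have hfin1 : s * (2 * M1 A s) ≤ s * (X + Y) := by
        apply mul_le_mul_of_nonneg_left hsum hs0.le
      have hfin2 : s * (s * (1 - s^2)) < s * (2 * M1 A s) :=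
        mul_lt_mul_of_pos_left hHs hs0
      have hring : s * (s * (1 - s^2)) = (1 - s^2) * (s^2) := by ring
      linarith
  intro q hq α hα
  obtain ⟨hq1, hq2, hq3, hq4, hq5⟩ := hq
  obtain ⟨_, hα1, hα2⟩ := hα
  have hsum : M1 A q.2 + M2 A q.1 ≤ JPi A q.1 q.2 α := by
    simp only [JPi]; linarith
  rw [M2_eq_M1] at hsum
  have hH' : M1 A q.2 / q.1 + M1 A q.1 / q.2 + q.1*q.2 - 1 ≤ 0 := by
    have h5 := hq5
    simp only [H, M2_eq_M1] at h5
    linarith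
  rcases le_total q.1 q.2 with h | h
  · have hk := key q.1 q.2 hq1 h hq4 hH'
    linarith
  · have hk := key q.2 q.1 hq3 h hq2 (by linear_combination hH')
    linarith
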